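/- Let G = S_ω be the group of all permutations of ℕ with the topology of pointwise convergence, acting on H = 2^ℕ (functions ℕ → ℤ/2 with pointwise addition) by g · h = h ∘ g⁻¹. Then λ(H,G) equals the product topology on 2^ℕ. -/

import Mathlib

open TopologicalSpace Topology

abbrev sigma' : TopologicalSpace (Equiv.Perm ℕ) :=
  TopologicalSpace.induced (fun g : Equiv.Perm ℕ => (g : ℕ → ℕ)) Pi.topologicalSpace

abbrev tau' : TopologicalSpace (ℕ → ZMod 2) :=
  generateFrom {s : Set (ℕ → ZMod 2) | ∃ V : Set (Equiv.Perm ℕ), IsOpen[sigma'] V ∧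
    ∃ h : ℕ → ZMod 2, s = (fun g : Equiv.Perm ℕ => h ∘ ⇑(g⁻¹)) '' V}

def orb (h : ℕ → ZMod 2) : Set (ℕ → ZMod 2) :=
  {y | ∃ g : Equiv.Perm ℕ, y = h ∘ ⇑(g⁻¹)}


lemma exists_perm_extend (h y : ℕ → ZMod 2) (g₀ : Equiv.Perm ℕ) (F₀ : Finset ℕ)
    (ha : ∀ i ∈ F₀, y (g₀ i) = h i)
    (hb : ∀ v : ZMod 2, {i | h i = v}.Infinite)
    (hc : ∀ v : ZMod 2, {j | y j = v}.Infinite) :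
    ∃ g : Equiv.Perm ℕ, (∀ i ∈ F₀, g i = g₀ i) ∧ ∀ i, y (g i) = h i := by
  classical
  set T : Finset ℕ := F₀.image g₀ with hT
  set A : ZMod 2 → Set ℕ := fun v => {i | i ∉ F₀ ∧ h i = v} with hA
  set B : ZMod 2 → Set ℕ := fun v => {j | j ∉ T ∧ y j = v} with hB
  have hAinf : ∀ v, (A v).Infinite := by
    intro v
    refine (((hb v).diff F₀.finite_toSet).mono ?_)
    intro i hi; exact ⟨hi.2, hi.1⟩
  have hBinf : ∀ v, (B v).Infinite := by
    intro v
    refine (((hc v).diff T.finite_toSet).mono ?_)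
    intro i hi; exact ⟨hi.2, hi.1⟩
  have key : ∀ v : ZMod 2, Nonempty (↥(A v) ≃ ↥(B v)) := by
    intro v
    have h1 := (hAinf v).to_subtype
    have h2 := (hBinf v).to_subtype
    obtain ⟨d1⟩ := nonempty_denumerable ↥(A v)
    obtain ⟨d2⟩ := nonempty_denumerable ↥(B v)
    exact ⟨(@Denumerable.eqv _ d1).trans (@Denumerable.eqv _ d2).symm⟩
  let E : ∀ v : ZMod 2, ↥(A v) ≃ ↥(B v) := fun v => (key v).some
  let G : ℕ → ℕ := fun i => if hi : i ∈ F₀ then g₀ i else ((E (h i)) ⟨i, hi, rfl⟩ : ℕ)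
  let Gi : ℕ → ℕ := fun j => if hj : j ∈ T then g₀.symm j else ((E (y j)).symm ⟨j, hj, rfl⟩ : ℕ)
  have mainG : ∀ (v : ZMod 2) (i : ℕ) (hi : i ∈ A v), G i = ((E v) ⟨i, hi⟩ : ℕ) := by
    intro v i hi
    have h2 : h i = v := hi.2
    subst h2
    simp only [G, dif_neg hi.1]
  have mainGi : ∀ (v : ZMod 2) (j : ℕ) (hj : j ∈ B v), Gi j = ((E v).symm ⟨j, hj⟩ : ℕ) := by
    intro v j hj
    have h2 : y j = v := hj.2
    subst h2
    simp only [Gi, dif_neg hj.1]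
  have left : ∀ i, Gi (G i) = i := by
    intro i
    by_cases hi : i ∈ F₀
    · have : G i = g₀ i := dif_pos hi
      rw [this]
      have hmem : g₀ i ∈ T := Finset.mem_image_of_mem _ hi
      simp only [Gi, dif_pos hmem, Equiv.symm_apply_apply]
    · have hiA : i ∈ A (h i) := ⟨hi, rfl⟩
      rw [mainG (h i) i hiA]
      set b := (E (h i)) ⟨i, hiA⟩ with hbdef
      rw [mainGi (h i) (b : ℕ) b.2]
      have : (⟨(b : ℕ), b.2⟩ : ↥(B (h i))) = b := rfl
      rw [this, hbdef, Equiv.symm_apply_apply]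
  have right : ∀ j, G (Gi j) = j := by
    intro j
    by_cases hj : j ∈ T
    · have : Gi j = g₀.symm j := dif_pos hj
      rw [this]
      obtain ⟨i, hiF, hij⟩ := Finset.mem_image.mp hj
      have hmem : g₀.symm j ∈ F₀ := by
        rw [← hij, Equiv.symm_apply_apply]; exact hiF
      simp only [G, dif_pos hmem, Equiv.apply_symm_apply]
    · have hjB : j ∈ B (y j) := ⟨hj, rfl⟩
      rw [mainGi (y j) j hjB]
      set a := (E (y j)).symm ⟨j, hjB⟩ with hadef
      rw [mainG (y j) (a : ℕ) a.2]
      have : (⟨(a : ℕ), a.2⟩ : ↥(A (y j))) = a := rfl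
      rw [this, hadef, Equiv.apply_symm_apply]
  refine ⟨⟨G, Gi, left, right⟩, fun i hi => dif_pos hi, fun i => ?_⟩
  by_cases hi : i ∈ F₀
  · show y (G i) = h i
    rw [show G i = g₀ i from dif_pos hi]; exact ha i hi
  · have hiA : i ∈ A (h i) := ⟨hi, rfl⟩
    show y (G i) = h i
    rw [mainG (h i) i hiA]
    exact ((E (h i)) ⟨i, hiA⟩).2.2

lemma sigma_open_point_cyl (k j : ℕ) : IsOpen[sigma'] {g : Equiv.Perm ℕ | g k = j} := by
  letI := sigma'
  rw [isOpen_induced_iff]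
  refine ⟨(fun u : ℕ → ℕ => u k) ⁻¹' {j}, (continuous_apply k).isOpen_preimage _ (isOpen_discrete _), rfl⟩

lemma tau_open_cyl_inter_orb (F : Finset ℕ) (b h : ℕ → ZMod 2) :
    IsOpen[tau'] {y | (∀ j ∈ F, y j = b j) ∧ y ∈ orb h} := by
  apply TopologicalSpace.isOpen_generateFrom_of_mem
  letI := sigma'
  refine ⟨(⋃ m ∈ {m : ℕ → ℕ | ∀ j ∈ F, h (m j) = b j},
    ⋂ j ∈ F, {g : Equiv.Perm ℕ | g (m j) = j}), ?_, h, ?_⟩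
  · refine isOpen_iUnion fun m => isOpen_iUnion fun hm => ?_
    exact isOpen_biInter_finset fun j hj => sigma_open_point_cyl (m j) j
  · ext y
    constructor
    · rintro ⟨hyF, g, rfl⟩
      refine Set.mem_image_of_mem _ ?_
      simp only [Set.mem_iUnion, Set.mem_iInter]
      refine ⟨⇑g⁻¹, fun j hj => ?_, fun j hj => ?_⟩
      · exact hyF j hj
      · exact g.apply_symm_apply j
    · rintro ⟨g, hgV, rfl⟩
      simp only [Set.mem_iUnion, Set.mem_iInter] at hgV
      obtain ⟨m, hm, hgm⟩ := hgV
      refine ⟨fun j hj => ?_, g, rfl⟩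
      show h (g⁻¹ j) = b j
      have : g⁻¹ j = m j := by
        have := hgm j hj
        exact (Equiv.symm_apply_eq g).mpr this.symm
      rw [this]; exact hm j hj

lemma exists_finset_of_pi_open {ι : Type*} {X : ι → Type*} [∀ i, TopologicalSpace (X i)]
    {O : Set (∀ i, X i)} (hO : IsOpen O) {u : ∀ i, X i} (hu : u ∈ O) :
    ∃ I : Finset ι, ∀ u', (∀ i ∈ I, u' i = u i) → u' ∈ O := by
  obtain ⟨I, t, h1, h2⟩ := isOpen_pi_iff.mp hO u hu
  refine ⟨I, fun u' hu' => h2 fun i hi => ?_⟩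
  rw [hu' i hi]; exact (h1 i hi).2

lemma pi_open_tau_open {U : Set (ℕ → ZMod 2)} (hU : IsOpen U) : IsOpen[tau'] U := by
  classical
  letI := tau'
  show IsOpen U
  choose Fx hFx using fun (x : ℕ → ZMod 2) (hx : x ∈ U) => exists_finset_of_pi_open hU hx
  have hUeq : U = ⋃ x, ⋃ hx : x ∈ U, {y | (∀ j ∈ Fx x hx, y j = x j) ∧ y ∈ orb x} := by
    apply subset_antisymm
    · intro x hx
      simp only [Set.mem_iUnion]
      exact ⟨x, hx, fun j _ => rfl, 1, by funext i; simp⟩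
    · intro y hy
      simp only [Set.mem_iUnion] at hy
      obtain ⟨x, hx, h1, _⟩ := hy
      exact hFx x hx y h1
  rw [hUeq]
  exact isOpen_iUnion fun x => isOpen_iUnion fun hx => tau_open_cyl_inter_orb _ _ _

lemma tau_nbhd {W : Set (ℕ → ZMod 2)} (hW : IsOpen[tau'] W) :
    ∀ e ∈ W, (∀ v : ZMod 2, {i | e i = v}.Infinite) →
      ∃ F : Finset ℕ, ∀ y, (∀ i ∈ F, y i = e i) →
        (∀ v : ZMod 2, {i | y i = v}.Infinite) → y ∈ W := by
  have hW' : TopologicalSpace.GenerateOpen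
      {s : Set (ℕ → ZMod 2) | ∃ V : Set (Equiv.Perm ℕ), IsOpen[sigma'] V ∧
        ∃ h : ℕ → ZMod 2, s = (fun g : Equiv.Perm ℕ => h ∘ ⇑(g⁻¹)) '' V} W := hW
  clear hW
  induction hW' with
  | basic s hs =>
    obtain ⟨V, hV, h, rfl⟩ := hs
    intro e he hinf
    obtain ⟨g₀, hg₀V, hge⟩ := he
    obtain ⟨O, hO, hVO⟩ := isOpen_induced_iff.mp hV
    have hg₀O : (⇑g₀ : ℕ → ℕ) ∈ O := by rw [← hVO] at hg₀V; exact hg₀V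
    obtain ⟨F₀, hF₀⟩ := exists_finset_of_pi_open hO hg₀O
    have heg : ∀ j, e j = h (g₀⁻¹ j) := fun j => by rw [← hge]; rfl
    have heg' : ∀ i, h i = e (g₀ i) := fun i => by
      rw [heg (g₀ i)]; congr 1; exact (g₀.symm_apply_apply i).symm
    refine ⟨F₀.image ⇑g₀, fun y hy hyinf => ?_⟩
    have hext := exists_perm_extend h y g₀ F₀
      (fun i hi => by
        rw [hy (g₀ i) (Finset.mem_image_of_mem _ hi), ← heg' i])
      (fun v => by
        have : {i | h i = v} = ⇑g₀ ⁻¹' {j | e j = v} := by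
          ext i; simp only [Set.mem_setOf_eq, Set.mem_preimage]; rw [heg' i]
        rw [this]
        exact (hinf v).preimage (by rw [Set.range_eq_univ.mpr g₀.surjective]; exact Set.subset_univ _))
      hyinf
    obtain ⟨g, hgF, hgy⟩ := hext
    refine ⟨g, ?_, ?_⟩
    · rw [← hVO]
      exact hF₀ ⇑g (fun i hi => hgF i hi)
    · funext j
      show h (g⁻¹ j) = y j
      have := hgy (g⁻¹ j)
      rw [show g (g⁻¹ j) = j from g.apply_symm_apply j] at this
      exact this.symm
  | univ => exact fun e he hinf => ⟨∅, fun y _ _ => trivial⟩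
  | inter s t hs ht ihs iht =>
    intro e he hinf
    obtain ⟨F1, h1⟩ := ihs e he.1 hinf
    obtain ⟨F2, h2⟩ := iht e he.2 hinf
    exact ⟨F1 ∪ F2, fun y hy hyi =>
      ⟨h1 y (fun i hi => hy i (Finset.mem_union_left _ hi)) hyi,
       h2 y (fun i hi => hy i (Finset.mem_union_right _ hi)) hyi⟩⟩
  | sUnion S hS ih =>
    intro e he hinf
    obtain ⟨s, hsS, hes⟩ := he
    obtain ⟨F, hF⟩ := ih s hsS e hes hinf
    exact ⟨F, fun y hy hyi => ⟨s, hsS, hF y hy hyi⟩⟩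

def ee1 : ℕ → ZMod 2 := fun n => if n % 2 = 0 then 0 else 1
def ee2 : ℕ → ZMod 2 := fun n => if n % 4 < 2 then 0 else 1

lemma zmod2_cases : ∀ v : ZMod 2, v = 0 ∨ v = 1 := by decide

lemma ee1_inf : ∀ v : ZMod 2, {n | ee1 n = v}.Infinite := by
  intro v
  rcases zmod2_cases v with rfl | rfl
  · exact Set.infinite_of_injective_forall_mem (f := fun k => 2 * k)
      (fun a b hab => by dsimp only at hab; omega) (fun k => by simp [ee1, Nat.mul_mod_right])
  · exact Set.infinite_of_injective_forall_mem (f := fun k => 2 * k + 1)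
      (fun a b hab => by dsimp only at hab; omega) (fun k => by
        have : (2 * k + 1) % 2 = 1 := by omega
        simp [ee1, this])

lemma ee2_inf : ∀ v : ZMod 2, {n | ee2 n = v}.Infinite := by
  intro v
  rcases zmod2_cases v with rfl | rfl
  · exact Set.infinite_of_injective_forall_mem (f := fun k => 4 * k)
      (fun a b hab => by dsimp only at hab; omega) (fun k => by
        have : (4 * k) % 4 = 0 := by omega
        simp [ee2, this])
  · exact Set.infinite_of_injective_forall_mem (f := fun k => 4 * k + 2)
      (fun a b hab => by dsimp only at hab; omega) (fun k => by
        have : (4 * k + 2) % 4 = 2 := by omega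
        simp [ee2, this])

lemma ee12_inf : ∀ v : ZMod 2, {n | ee1 n + ee2 n = v}.Infinite := by
  intro v
  rcases zmod2_cases v with rfl | rfl
  · exact Set.infinite_of_injective_forall_mem (f := fun k => 4 * k)
      (fun a b hab => by dsimp only at hab; omega) (fun k => by
        have h1 : (4 * k) % 2 = 0 := by omega
        have h2 : (4 * k) % 4 = 0 := by omega
        simp [ee1, ee2, h1, h2])
  · exact Set.infinite_of_injective_forall_mem (f := fun k => 4 * k + 1)
      (fun a b hab => by dsimp only at hab; omega) (fun k => by
        have h1 : (4 * k + 1) % 2 = 1 := by omega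
        have h2 : (4 * k + 1) % 4 = 1 := by omega
        simp [ee1, ee2, h1, h2])

/-- For `G = S_ω` acting on `H = 2^ℕ` by `g · h = h ∘ g⁻¹`, the topology `λ(H,G)` is the
product topology on `2^ℕ`. -/
theorem lambda_eq_product_topology :
    letI σ : TopologicalSpace (Equiv.Perm ℕ) :=
      TopologicalSpace.induced (fun g : Equiv.Perm ℕ => (g : ℕ → ℕ)) Pi.topologicalSpace
    letI τ : TopologicalSpace (ℕ → ZMod 2) :=
      generateFrom {s : Set (ℕ → ZMod 2) | ∃ V : Set (Equiv.Perm ℕ), IsOpen[σ] V ∧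
        ∃ h : ℕ → ZMod 2, s = (fun g : Equiv.Perm ℕ => h ∘ ⇑(g⁻¹)) '' V}
    ∀ lam : TopologicalSpace (ℕ → ZMod 2),
      (∀ U : Set (ℕ → ZMod 2), IsOpen[lam] U ↔ ∀ h₁ h₂ : ℕ → ZMod 2,
          IsOpen[τ] ((fun u => h₁ + u + h₂) '' U) ∧
          IsOpen[τ] ((fun u => h₁ + (-u) + h₂) '' U)) →
      lam = (Pi.topologicalSpace : TopologicalSpace (ℕ → ZMod 2)) := by
  intro lam hlam
  letI : TopologicalSpace (ℕ → ZMod 2) := Pi.topologicalSpace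
  apply TopologicalSpace.ext
  funext U
  apply propext
  rw [hlam U]
  constructor
  · -- lam-open → Pi-open
    intro hU'
    rw [isOpen_iff_forall_mem_open]
    intro x hx
    -- translate with c₁ = x + ee1
    have step : ∀ e : ℕ → ZMod 2, (∀ v : ZMod 2, {i | e i = v}.Infinite) →
        ∃ F : Finset ℕ, ∀ y : ℕ → ZMod 2, (∀ i ∈ F, y i = e i) →
          (∀ v : ZMod 2, {i | y i = v}.Infinite) → (fun i => y i + x i + e i) ∈ U := by
      intro e he
      have hW : IsOpen[tau'] ((fun u => (x + e) + u + 0) '' U) := (hU' (x + e) 0).1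
      have heW : e ∈ (fun u => (x + e) + u + 0) '' U := by
        refine ⟨x, hx, ?_⟩
        funext i
        show (x i + e i) + x i + 0 = e i
        have : ∀ a b : ZMod 2, (a + b) + a + 0 = b := by decide
        exact this _ _
      obtain ⟨F, hF⟩ := tau_nbhd hW e heW he
      refine ⟨F, fun y hy hyi => ?_⟩
      obtain ⟨u, hu, huy⟩ := hF y hy hyi
      have : (fun i => y i + x i + e i) = u := by
        funext i
        have h1 : y i = (x i + e i) + u i + 0 := by rw [← huy]; rfl
        have : ∀ a b c u : ZMod 2, a = (b + c) + u + 0 → a + b + c = u := by decide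
        exact this _ _ _ _ h1
      rw [this]; exact hu
    obtain ⟨F1, hF1⟩ := step ee1 ee1_inf
    obtain ⟨F2, hF2⟩ := step ee2 ee2_inf
    refine ⟨{y | ∀ i ∈ F1 ∪ F2, y i = x i}, ?_, ?_, fun i _ => rfl⟩
    · -- the cylinder is inside U
      intro z hz
      simp only [Set.mem_setOf_eq] at hz
      set y1 : ℕ → ZMod 2 := fun i => z i + x i + ee1 i with hy1
      have hy1e : ∀ i ∈ F1, y1 i = ee1 i := by
        intro i hi
        have hzx : z i = x i := hz i (Finset.mem_union_left _ hi)
        show z i + x i + ee1 i = ee1 i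
        rw [hzx]
        have : ∀ a b : ZMod 2, a + a + b = b := by decide
        exact this _ _
      have hzcalc : ∀ (e : ℕ → ZMod 2), (fun i => (z i + x i + e i) + x i + e i) = z := by
        intro e; funext i
        have : ∀ z x e : ZMod 2, (z + x + e) + x + e = z := by decide
        exact this _ _ _
      by_cases hcase : ∀ v : ZMod 2, {i | y1 i = v}.Infinite
      · have := hF1 y1 hy1e hcase
        rw [show (fun i => y1 i + x i + ee1 i) = z from hzcalc ee1] at this
        exact this
      · push_neg at hcase
        obtain ⟨v, hv⟩ := hcase
        have hvfin : {i | y1 i = v}.Finite := hv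
        set y2 : ℕ → ZMod 2 := fun i => z i + x i + ee2 i with hy2
        have hy2e : ∀ i ∈ F2, y2 i = ee2 i := by
          intro i hi
          have hzx : z i = x i := hz i (Finset.mem_union_right _ hi)
          show z i + x i + ee2 i = ee2 i
          rw [hzx]
          have : ∀ a b : ZMod 2, a + a + b = b := by decide
          exact this _ _
        have hy2inf : ∀ w : ZMod 2, {i | y2 i = w}.Infinite := by
          intro w
          refine (((ee12_inf (w + v + 1)).diff hvfin).mono ?_)
          rintro i ⟨h12, hnv⟩
          have hne : y1 i ≠ v := hnv
          have hy1v : y1 i = v + 1 := by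
            have : ∀ a v : ZMod 2, a ≠ v → a = v + 1 := by decide
            exact this _ _ hne
          show y2 i = w
          have key : ∀ z x e1 e2 v w : ZMod 2,
              z + x + e1 = v + 1 → e1 + e2 = w + v + 1 → z + x + e2 = w := by decide
          exact key (z i) (x i) (ee1 i) (ee2 i) v w hy1v h12
        have := hF2 y2 hy2e hy2inf
        rw [show (fun i => y2 i + x i + ee2 i) = z from hzcalc ee2] at this
        exact this
    · -- cylinder is Pi-open
      have : {y : ℕ → ZMod 2 | ∀ i ∈ F1 ∪ F2, y i = x i}
          = ⋂ i ∈ (F1 ∪ F2), (fun y : ℕ → ZMod 2 => y i) ⁻¹' {x i} := by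
        ext y; simp [Set.mem_iInter]
      rw [this]
      exact isOpen_biInter_finset fun i _ =>
        (continuous_apply i).isOpen_preimage _ (isOpen_discrete _)
  · -- Pi-open → lam-open
    intro hU h₁ h₂
    have himg1 : (fun u : ℕ → ZMod 2 => h₁ + u + h₂) '' U
        = (fun y : ℕ → ZMod 2 => y + (h₁ + h₂)) ⁻¹' U := by
      ext y
      constructor
      · rintro ⟨u, hu, rfl⟩
        have : (h₁ + u + h₂) + (h₁ + h₂) = u := by
          funext i
          show (h₁ i + u i + h₂ i) + (h₁ i + h₂ i) = u i
          have : ∀ a b c : ZMod 2, (b + a + c) + (b + c) = a := by decide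
          exact this _ _ _
        show (h₁ + u + h₂) + (h₁ + h₂) ∈ U
        rw [this]; exact hu
      · intro hy
        refine ⟨y + (h₁ + h₂), hy, ?_⟩
        funext i
        show h₁ i + (y i + (h₁ i + h₂ i)) + h₂ i = y i
        have : ∀ a b c : ZMod 2, b + (a + (b + c)) + c = a := by decide
        exact this _ _ _
    have himg2 : (fun u : ℕ → ZMod 2 => h₁ + (-u) + h₂) = (fun u : ℕ → ZMod 2 => h₁ + u + h₂) := by
      funext u
      funext i
      show h₁ i + (-(u i)) + h₂ i = h₁ i + u i + h₂ i
      have : ∀ a b c : ZMod 2, b + (-a) + c = b + a + c := by decide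
      exact this _ _ _
    have hcont : Continuous (fun y : ℕ → ZMod 2 => y + (h₁ + h₂)) := by
      apply continuous_pi
      intro i
      show Continuous fun y : ℕ → ZMod 2 => y i + (h₁ i + h₂ i)
      exact (continuous_of_discreteTopology (f := fun a : ZMod 2 => a + (h₁ i + h₂ i))).comp (continuous_apply i)
    have hpre : IsOpen ((fun y : ℕ → ZMod 2 => y + (h₁ + h₂)) ⁻¹' U) :=
      hcont.isOpen_preimage _ hU
    constructor
    · rw [himg1]; exact pi_open_tau_open hpre
    · rw [himg2, himg1]; exact pi_open_tau_open hpre
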